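/- Let Q be a probability kernel on X and π a probability measure satisfying the detailed balance condition with acceptance function α: for all bounded measurable f : X × X → ℝ, ∬ f(x,y) α(x,y) π(dx) Q(x, dy) = ∬ f(x,y) α(y,x) π(dy) Q(y, dx). Then the Metropolis–Hastings kernel K(x, A) = ∫_A α(x,y) Q(x, dy) + δ_x(A) ∫ (1 − α(x,y)) Q(x, dy) leaves π invariant: π(A) = ∫ K(x, A) dπ(x) for all measurable A. -/

import Mathlib

open MeasureTheory ProbabilityTheory
open scoped ENNReal

lemma mh_aux {X : Type*} [MeasurableSpace X]
    (Q : Kernel X X) [IsMarkovKernel Q] (π : Measure X) [IsProbabilityMeasure π]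
    (h : X → X → ℝ) (hm : Measurable (Function.uncurry h))
    (h0 : ∀ x y, 0 ≤ h x y) (h1 : ∀ x y, h x y ≤ 1) :
    ∫⁻ x, ∫⁻ y, ENNReal.ofReal (h x y) ∂(Q x) ∂π
      = ENNReal.ofReal (∫ x, ∫ y, h x y ∂(Q x) ∂π) := by
  have hmx : ∀ x, Measurable (h x) := fun x => hm.comp measurable_prodMk_left
  have hint : ∀ x, Integrable (h x) (Q x) := fun x =>
    (integrable_const (1 : ℝ)).mono' (hmx x).aestronglyMeasurable
      (Filter.Eventually.of_forall fun y => abs_le.2 ⟨by linarith [h0 x y], h1 x y⟩)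
  have step1 : ∀ x, ∫⁻ y, ENNReal.ofReal (h x y) ∂(Q x)
      = ENNReal.ofReal (∫ y, h x y ∂(Q x)) := fun x =>
    (ofReal_integral_eq_lintegral_ofReal (hint x)
      (Filter.Eventually.of_forall (h0 x))).symm
  simp_rw [step1]
  set g : X → ℝ := fun x => ∫ y, h x y ∂(Q x) with hg
  have hgmeas : StronglyMeasurable g :=
    hm.stronglyMeasurable.integral_kernel_prod_right
  have hg0 : ∀ x, 0 ≤ g x := fun x => integral_nonneg (h0 x)
  have hg1 : ∀ x, g x ≤ 1 := fun x => by
    calc g x ≤ ∫ _, (1:ℝ) ∂(Q x) := integral_mono (hint x) (integrable_const 1) (h1 x)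
    _ = 1 := by simp
  have hgint : Integrable g π :=
    (integrable_const (1 : ℝ)).mono' hgmeas.aestronglyMeasurable
      (Filter.Eventually.of_forall fun x => abs_le.2 ⟨by linarith [hg0 x], hg1 x⟩)
  exact (ofReal_integral_eq_lintegral_ofReal hgint
    (Filter.Eventually.of_forall hg0)).symm

theorem metropolisHastings_invariant {X : Type*} [MeasurableSpace X]
    (Q : Kernel X X) [IsMarkovKernel Q] (π : Measure X) (hπ : IsProbabilityMeasure π)
    (α : X → X → ℝ) (hα : Measurable (Function.uncurry α))
    (hα01 : ∀ x y, α x y ∈ Set.Icc (0 : ℝ) 1)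
    (hdb : ∀ f : X → X → ℝ, Measurable (Function.uncurry f) → (∃ M, ∀ x y, |f x y| ≤ M) →
      ∫ x, ∫ y, f x y * α x y ∂(Q x) ∂π = ∫ y, ∫ x, f x y * α y x ∂(Q y) ∂π)
    (K : Kernel X X) [IsMarkovKernel K]
    (hK : ∀ (x : X) (A : Set X), MeasurableSet A →
      K x A = (∫⁻ y in A, ENNReal.ofReal (α x y) ∂(Q x)) +
        Measure.dirac x A * ∫⁻ y, ENNReal.ofReal (1 - α x y) ∂(Q x)) :
    π.bind (K ·) = π := by
  have hα0 : ∀ x y, 0 ≤ α x y := fun x y => (hα01 x y).1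
  have hα1 : ∀ x y, α x y ≤ 1 := fun x y => (hα01 x y).2
  set β : X → X → ℝ≥0∞ := fun x y => ENNReal.ofReal (α x y) with hβ
  have hβmeas : Measurable (Function.uncurry β) := by
    exact ENNReal.measurable_ofReal.comp hα
  have hβ1 : ∀ x y, β x y ≤ 1 := fun x y => by
    exact ENNReal.ofReal_le_one.2 (hα1 x y)
  ext A hA
  rw [Measure.bind_apply hA (Kernel.measurable K).aemeasurable]
  -- split K into two parts
  have hI : ∀ x, ∫⁻ y, ENNReal.ofReal (1 - α x y) ∂(Q x)
      = 1 - ∫⁻ y, β x y ∂(Q x) := by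
    intro x
    have : ∀ y, ENNReal.ofReal (1 - α x y) = 1 - β x y := fun y => by
      rw [hβ]; rw [ENNReal.ofReal_sub _ (hα0 x y)]; simp
    simp_rw [this]
    rw [lintegral_sub
      (show Measurable fun y => β x y from hβmeas.comp measurable_prodMk_left)
      (by
        have : ∫⁻ y, β x y ∂(Q x) ≤ 1 := by
          calc ∫⁻ y, β x y ∂(Q x) ≤ ∫⁻ _, 1 ∂(Q x) := lintegral_mono (hβ1 x)
          _ = 1 := by simp
        exact (lt_of_le_of_lt this (by simp)).ne) (Filter.Eventually.of_forall (hβ1 x))]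
    simp
  simp_rw [hK _ A hA, hI]
  have hmI : Measurable fun x => ∫⁻ y in A, β x y ∂(Q x) :=
    Measurable.setLIntegral_kernel_prod_right hβmeas hA
  have hmg : Measurable fun x => ∫⁻ y, β x y ∂(Q x) :=
    hβmeas.lintegral_kernel_prod_right
  have hdirac : ∀ x, Measure.dirac x A = A.indicator (fun _ => (1:ℝ≥0∞)) x := fun x =>
    Measure.dirac_apply' x hA
  simp_rw [hdirac]
  rw [lintegral_add_left hmI]
  have hsplit : ∫⁻ x, A.indicator (fun _ => (1:ℝ≥0∞)) x * (1 - ∫⁻ y, β x y ∂(Q x)) ∂π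
      = ∫⁻ x in A, (1 - ∫⁻ y, β x y ∂(Q x)) ∂π := by
    rw [← lintegral_indicator hA _]
    congr 1
    ext x
    by_cases hx : x ∈ A <;> simp [Set.indicator, hx]
  rw [hsplit]
  have hgbd : ∀ x, ∫⁻ y, β x y ∂(Q x) ≤ 1 := fun x => by
    calc ∫⁻ y, β x y ∂(Q x) ≤ ∫⁻ _, 1 ∂(Q x) := lintegral_mono (hβ1 x)
    _ = 1 := by simp
  have hsub : ∫⁻ x in A, (1 - ∫⁻ y, β x y ∂(Q x)) ∂π
      = π A - ∫⁻ x in A, ∫⁻ y, β x y ∂(Q x) ∂π := by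
    have hfin : ∫⁻ x in A, ∫⁻ y, β x y ∂(Q x) ∂π ≠ ⊤ := by
      have : ∫⁻ x in A, ∫⁻ y, β x y ∂(Q x) ∂π ≤ π A := by
        calc ∫⁻ x in A, ∫⁻ y, β x y ∂(Q x) ∂π ≤ ∫⁻ _ in A, 1 ∂π :=
          lintegral_mono fun x => hgbd x
        _ = π A := by simp
      exact (lt_of_le_of_lt this (measure_lt_top π A)).ne
    rw [lintegral_sub hmg hfin (Filter.Eventually.of_forall fun x => hgbd x)]
    simp
  rw [hsub]
  -- detailed balance step
  have key : ∫⁻ x, ∫⁻ y in A, β x y ∂(Q x) ∂π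
      = ∫⁻ x in A, ∫⁻ y, β x y ∂(Q x) ∂π := by
    have hindm : Measurable (A.indicator (fun _ => (1:ℝ))) :=
      measurable_const.indicator hA
    -- LHS via aux with h x y = 1_A(y) * α x y
    have h1m : Measurable (Function.uncurry fun x y =>
        A.indicator (fun _ => (1:ℝ)) y * α x y) :=
      (hindm.comp measurable_snd).mul hα
    have h2m : Measurable (Function.uncurry fun x y =>
        A.indicator (fun _ => (1:ℝ)) x * α x y) :=
      (hindm.comp measurable_fst).mul hα
    have hind01 : ∀ z, A.indicator (fun _ => (1:ℝ)) z ∈ Set.Icc (0:ℝ) 1 := fun z => by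
      by_cases hz : z ∈ A <;> simp [Set.indicator, hz]
    have hb0 : ∀ x y, 0 ≤ A.indicator (fun _ => (1:ℝ)) y * α x y := fun x y =>
      mul_nonneg (hind01 y).1 (hα0 x y)
    have hb1 : ∀ x y, A.indicator (fun _ => (1:ℝ)) y * α x y ≤ 1 := fun x y =>
      mul_le_one₀ (hind01 y).2 (hα0 x y) (hα1 x y)
    have hc0 : ∀ x y, 0 ≤ A.indicator (fun _ => (1:ℝ)) x * α x y := fun x y =>
      mul_nonneg (hind01 x).1 (hα0 x y)
    have hc1 : ∀ x y, A.indicator (fun _ => (1:ℝ)) x * α x y ≤ 1 := fun x y =>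
      mul_le_one₀ (hind01 x).2 (hα0 x y) (hα1 x y)
    have hL : ∫⁻ x, ∫⁻ y in A, β x y ∂(Q x) ∂π
        = ∫⁻ x, ∫⁻ y, ENNReal.ofReal (A.indicator (fun _ => (1:ℝ)) y * α x y) ∂(Q x) ∂π := by
      congr 1; ext x
      rw [← lintegral_indicator hA _]
      congr 1; ext y
      by_cases hy : y ∈ A <;> simp [Set.indicator, hy, hβ]
    have hR : ∫⁻ x in A, ∫⁻ y, β x y ∂(Q x) ∂π
        = ∫⁻ x, ∫⁻ y, ENNReal.ofReal (A.indicator (fun _ => (1:ℝ)) x * α x y) ∂(Q x) ∂π := by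
      rw [← lintegral_indicator hA _]
      congr 1; ext x
      by_cases hx : x ∈ A <;> simp [Set.indicator, hx, hβ, lintegral_const]
    rw [hL, hR, mh_aux Q π _ h1m hb0 hb1, mh_aux Q π _ h2m hc0 hc1]
    congr 1
    have := hdb (fun x y => A.indicator (fun _ => (1:ℝ)) y)
      (hindm.comp measurable_snd)
      ⟨1, fun x y => abs_le.2 ⟨by linarith [(hind01 y).1], (hind01 y).2⟩⟩
    rw [this]
  rw [key]
  exact add_tsub_cancel_of_le (by
    calc ∫⁻ x in A, ∫⁻ y, β x y ∂(Q x) ∂π ≤ ∫⁻ _ in A, 1 ∂π :=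
      lintegral_mono fun x => hgbd x
    _ = π A := by simp)
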